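/- arXiv:2602.18329 — 2 statements merged into one kernel-verified Lean document; each statement's English description precedes it below -/
import Mathlib

section
/- Let n be a positive integer, σ > 0, and let φ₁, φ₂ : ℝⁿ → ℝ be bounded continuous functions. Define γ²_φ(x) = ∫_{ℝⁿ} φ(x − α)·ΔG(α) dα, where ΔG(α) = ((∑_{i=1}^n αᵢ² − nσ²)/σ⁴)·exp(−(∑_{i=1}^n αᵢ²)/(2σ²)). Then sup_{x ∈ ℝⁿ} |γ²_{φ₁}(x) − γ²_{φ₂}(x)| ≤ (2n(2πσ²)^{n/2}/σ²) · sup_{x ∈ ℝⁿ} |φ₁(x) − φ₂(x)|. -/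
open MeasureTheory Real


lemma sq_mul_gaussian_integrable {b : ℝ} (hb : 0 < b) :
    Integrable fun x : ℝ => x ^ 2 * Real.exp (-b * x ^ 2) := by
  have := integrable_rpow_mul_exp_neg_mul_sq hb (s := 2) (by norm_num)
  have h2 : ∀ x : ℝ, x ^ (2 : ℝ) = x ^ 2 := fun x => by
    rw [show (2:ℝ) = ((2:ℕ):ℝ) by norm_num, Real.rpow_natCast]
  simpa [h2] using this

lemma sq_mul_gaussian_integral {b : ℝ} (hb : 0 < b) :
    ∫ x : ℝ, x ^ 2 * Real.exp (-b * x ^ 2) = (2 * b)⁻¹ * Real.sqrt (π / b) := by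
  have hu : ∀ x : ℝ, HasDerivAt (fun y : ℝ => y) ((fun _ : ℝ => (1:ℝ)) x) x :=
    fun x => hasDerivAt_id x
  have hv : ∀ x : ℝ, HasDerivAt (fun y : ℝ => -(2 * b)⁻¹ * Real.exp (-b * y ^ 2))
      ((fun y : ℝ => y * Real.exp (-b * y ^ 2)) x) x := by
    intro x
    have h1 : HasDerivAt (fun y : ℝ => -b * y ^ 2) (-b * (2 * x)) x := by
      simpa using ((hasDerivAt_pow 2 x).const_mul (-b))
    have h2 := (h1.exp).const_mul (-(2 * b)⁻¹)
    refine h2.congr_deriv ?_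
    field_simp
  have huv' : Integrable ((fun y : ℝ => y) * fun y : ℝ => y * Real.exp (-b * y ^ 2)) := by
    have := sq_mul_gaussian_integrable hb
    apply this.congr
    filter_upwards with x
    simp [Pi.mul_apply]; ring
  have hu'v : Integrable ((fun _ : ℝ => (1:ℝ)) * fun y : ℝ => -(2 * b)⁻¹ * Real.exp (-b * y ^ 2)) := by
    have := (integrable_exp_neg_mul_sq hb).const_mul (-(2 * b)⁻¹)
    apply this.congr
    filter_upwards with x
    simp [Pi.mul_apply]
  have huv : Integrable ((fun y : ℝ => y) * fun y : ℝ => -(2 * b)⁻¹ * Real.exp (-b * y ^ 2)) := by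
    have := (integrable_mul_exp_neg_mul_sq hb).const_mul (-(2 * b)⁻¹)
    apply this.congr
    filter_upwards with x
    simp [Pi.mul_apply]; ring
  have key := MeasureTheory.integral_mul_deriv_eq_deriv_mul_of_integrable (fun x _ => hu x) (fun x _ => hv x) huv' hu'v huv
  calc ∫ x : ℝ, x ^ 2 * Real.exp (-b * x ^ 2)
      = ∫ x : ℝ, x * (x * Real.exp (-b * x ^ 2)) := by
        congr 1; funext x; ring
    _ = -∫ x : ℝ, (1:ℝ) * (-(2 * b)⁻¹ * Real.exp (-b * x ^ 2)) := key
    _ = (2 * b)⁻¹ * ∫ x : ℝ, Real.exp (-b * x ^ 2) := by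
        simp only [one_mul, neg_mul]
        rw [integral_neg, neg_neg, integral_const_mul]
    _ = (2 * b)⁻¹ * Real.sqrt (π / b) := by rw [integral_gaussian]


section PiGauss
variable {n : ℕ}

lemma pi_gauss_integral (n : ℕ) {b : ℝ} (hb : 0 < b) :
    ∫ α : Fin n → ℝ, ∏ i, Real.exp (-b * (α i) ^ 2) = Real.sqrt (π / b) ^ n := by
  rw [volume_pi, MeasureTheory.integral_fintype_prod_eq_pow (ι := Fin n) (fun x : ℝ => Real.exp (-b * x ^ 2)),
    integral_gaussian, Fintype.card_fin]

lemma pi_gauss_integrable (n : ℕ) {b : ℝ} (hb : 0 < b) :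
    Integrable (fun α : Fin n → ℝ => ∏ i, Real.exp (-b * (α i) ^ 2)) :=
  Integrable.fintype_prod (fun _ => integrable_exp_neg_mul_sq hb)

lemma pi_q_gauss_eq (b : ℝ) (α : Fin n → ℝ) :
    (∑ i, (α i) ^ 2) * ∏ j, Real.exp (-b * (α j) ^ 2)
      = ∑ i, ∏ j, ((if j = i then (α j) ^ 2 else 1) * Real.exp (-b * (α j) ^ 2)) := by
  rw [Finset.sum_mul]
  refine Finset.sum_congr rfl fun i _ => ?_
  rw [Finset.prod_mul_distrib, Finset.prod_ite_eq' Finset.univ i (fun j => (α j) ^ 2)]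
  simp

lemma pi_q_gauss_integrable (n : ℕ) {b : ℝ} (hb : 0 < b) :
    Integrable (fun α : Fin n → ℝ =>
      (∑ i, (α i) ^ 2) * ∏ j, Real.exp (-b * (α j) ^ 2)) := by
  have : Integrable (fun α : Fin n → ℝ =>
      ∑ i, ∏ j, ((if j = i then (α j) ^ 2 else 1) * Real.exp (-b * (α j) ^ 2))) := by
    apply integrable_finset_sum
    intro i _
    apply Integrable.fintype_prod (f := fun j t => (if j = i then t ^ 2 else 1) * Real.exp (-b * t ^ 2))
    intro j
    by_cases h : j = i
    · simpa [h] using sq_mul_gaussian_integrable hb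
    · simpa [h] using integrable_exp_neg_mul_sq hb
  exact this.congr (by filter_upwards with α; rw [pi_q_gauss_eq])

lemma pi_q_gauss_integral (n : ℕ) (hn : 0 < n) {b : ℝ} (hb : 0 < b) :
    ∫ α : Fin n → ℝ, (∑ i, (α i) ^ 2) * ∏ j, Real.exp (-b * (α j) ^ 2)
      = n * (2 * b)⁻¹ * Real.sqrt (π / b) ^ n := by
  have step1 : ∫ α : Fin n → ℝ, (∑ i, (α i) ^ 2) * ∏ j, Real.exp (-b * (α j) ^ 2)
      = ∑ i : Fin n, ∫ α : Fin n → ℝ,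
          ∏ j, ((if j = i then (α j) ^ 2 else 1) * Real.exp (-b * (α j) ^ 2)) := by
    rw [← integral_finset_sum]
    · congr 1; funext α; rw [pi_q_gauss_eq]
    · intro i _
      apply Integrable.fintype_prod (f := fun j t => (if j = i then t ^ 2 else 1) * Real.exp (-b * t ^ 2))
      intro j
      by_cases h : j = i
      · simpa [h] using sq_mul_gaussian_integrable hb
      · simpa [h] using integrable_exp_neg_mul_sq hb
  rw [step1]
  have step2 : ∀ i : Fin n, (∫ α : Fin n → ℝ,
      ∏ j, ((if j = i then (α j) ^ 2 else 1) * Real.exp (-b * (α j) ^ 2)))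
      = (2 * b)⁻¹ * Real.sqrt (π / b) ^ n := by
    intro i
    rw [volume_pi, MeasureTheory.integral_fin_nat_prod_eq_prod
      (fun j (t : ℝ) => (if j = i then t ^ 2 else 1) * Real.exp (-b * t ^ 2))]
    have hval : ∀ j : Fin n, (∫ t : ℝ, (if j = i then t ^ 2 else 1) * Real.exp (-b * t ^ 2))
        = if j = i then (2 * b)⁻¹ * Real.sqrt (π / b) else Real.sqrt (π / b) := by
      intro j
      by_cases h : j = i
      · simp only [h, if_true]; rw [← sq_mul_gaussian_integral hb]
      · simp only [h, if_false, one_mul]; rw [integral_gaussian]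
    calc (∏ j, ∫ t : ℝ, (if j = i then t ^ 2 else 1) * Real.exp (-b * t ^ 2))
        = ∏ j, (if j = i then (2 * b)⁻¹ * Real.sqrt (π / b) else Real.sqrt (π / b)) := by
          exact Finset.prod_congr rfl fun j _ => hval j
      _ = ((2 * b)⁻¹ * Real.sqrt (π / b)) *
            ∏ j ∈ Finset.univ.erase i, (if j = i then (2 * b)⁻¹ * Real.sqrt (π / b) else Real.sqrt (π / b)) := by
          rw [← Finset.mul_prod_erase Finset.univ _ (Finset.mem_univ i)]
          simp
      _ = ((2 * b)⁻¹ * Real.sqrt (π / b)) * Real.sqrt (π / b) ^ (n - 1) := by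
          congr 1
          rw [Finset.prod_congr rfl (fun j hj => by
            rw [if_neg (Finset.mem_erase.mp hj).1]), Finset.prod_const,
            Finset.card_erase_of_mem (Finset.mem_univ i), Finset.card_univ, Fintype.card_fin]
      _ = (2 * b)⁻¹ * Real.sqrt (π / b) ^ n := by
          rw [mul_assoc, ← pow_succ']
          congr 2
          omega
  rw [Finset.sum_congr rfl fun i _ => step2 i, Finset.sum_const, Finset.card_univ,
    Fintype.card_fin, nsmul_eq_mul]
  ring
end PiGauss

/-- For bounded continuous `φ₁ φ₂ : ℝⁿ → ℝ`, the LoG-filtered functions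
`γ²_φ(x) = ∫ φ(x − α)·ΔG(α) dα` with
`ΔG(α) = ((∑ αᵢ² − nσ²)/σ⁴)·exp(−(∑ αᵢ²)/(2σ²))` satisfy
`‖γ²_{φ₁} − γ²_{φ₂}‖_∞ ≤ (2n(2πσ²)^(n/2)/σ²) · ‖φ₁ − φ₂‖_∞`. -/
theorem glog_second_component_sup_bound
    (n : ℕ) (hn : 0 < n) (σ : ℝ) (hσ : 0 < σ)
    (φ₁ φ₂ : (Fin n → ℝ) → ℝ)
    (hφ₁c : Continuous φ₁) (hφ₂c : Continuous φ₂)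
    (hφ₁b : ∃ C, ∀ x, |φ₁ x| ≤ C) (hφ₂b : ∃ C, ∀ x, |φ₂ x| ≤ C) :
    (⨆ x : Fin n → ℝ,
        |(∫ α : Fin n → ℝ, φ₁ (x - α) *
            ((((∑ i, (α i) ^ 2) - n * σ ^ 2) / σ ^ 4)
              * Real.exp (-(∑ i, (α i) ^ 2) / (2 * σ ^ 2))))
          - ∫ α : Fin n → ℝ, φ₂ (x - α) *
            ((((∑ i, (α i) ^ 2) - n * σ ^ 2) / σ ^ 4)
              * Real.exp (-(∑ i, (α i) ^ 2) / (2 * σ ^ 2)))|)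
      ≤ (2 * n * (2 * Real.pi * σ ^ 2) ^ ((n : ℝ) / 2) / σ ^ 2)
          * ⨆ x : Fin n → ℝ, |φ₁ x - φ₂ x| := by

  obtain ⟨C₁, hC₁⟩ := hφ₁b
  obtain ⟨C₂, hC₂⟩ := hφ₂b
  set b : ℝ := (2 * σ ^ 2)⁻¹ with hbdef
  have hb : 0 < b := by positivity
  set K : (Fin n → ℝ) → ℝ := fun α =>
    ((((∑ i, (α i) ^ 2) - n * σ ^ 2) / σ ^ 4)
      * Real.exp (-(∑ i, (α i) ^ 2) / (2 * σ ^ 2))) with hKdef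
  -- exponential rewriting
  have hge : ∀ α : Fin n → ℝ,
      Real.exp (-(∑ i, (α i) ^ 2) / (2 * σ ^ 2)) = ∏ i, Real.exp (-b * (α i) ^ 2) := by
    intro α
    rw [← Real.exp_sum]
    congr 1
    rw [← Finset.mul_sum, hbdef]
    field_simp
  have hσ4 : (0:ℝ) < σ ^ 4 := by positivity
  -- the abstract constant
  set J : ℝ := Real.sqrt (π / b) with hJdef
  have hJA : J ^ n = (2 * Real.pi * σ ^ 2) ^ ((n : ℝ) / 2) := by
    have h2πσ : (0:ℝ) ≤ 2 * Real.pi * σ ^ 2 := by positivity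
    have hπb : π / b = 2 * Real.pi * σ ^ 2 := by
      rw [hbdef]; field_simp
    rw [hJdef, hπb, Real.sqrt_eq_rpow, ← Real.rpow_natCast ((2 * Real.pi * σ ^ 2) ^ ((1:ℝ)/2)) n,
      ← Real.rpow_mul h2πσ]
    congr 1
    ring
  have hJpos : 0 < J := Real.sqrt_pos.mpr (by positivity)
  have h2binv : (2 * b)⁻¹ = σ ^ 2 := by rw [hbdef]; field_simp
  -- integrability of K
  have hgI : Integrable (fun α : Fin n → ℝ => Real.exp (-(∑ i, (α i) ^ 2) / (2 * σ ^ 2))) :=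
    (pi_gauss_integrable n hb).congr (by filter_upwards with α; rw [hge])
  have hqgI : Integrable (fun α : Fin n → ℝ =>
      (∑ i, (α i) ^ 2) * Real.exp (-(∑ i, (α i) ^ 2) / (2 * σ ^ 2))) :=
    (pi_q_gauss_integrable n hb).congr (by filter_upwards with α; rw [hge])
  have hKI : Integrable K := by
    have : Integrable (fun α : Fin n → ℝ =>
        (σ ^ 4)⁻¹ * ((∑ i, (α i) ^ 2) * Real.exp (-(∑ i, (α i) ^ 2) / (2 * σ ^ 2)))
        - (n * σ ^ 2 / σ ^ 4) * Real.exp (-(∑ i, (α i) ^ 2) / (2 * σ ^ 2))) :=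
      (hqgI.const_mul _).sub (hgI.const_mul _)
    apply this.congr
    filter_upwards with α
    rw [hKdef]
    field_simp
  -- integral values
  have hI0 : ∫ α : Fin n → ℝ, Real.exp (-(∑ i, (α i) ^ 2) / (2 * σ ^ 2)) = J ^ n := by
    rw [integral_congr_ae (by filter_upwards with α; rw [hge]), pi_gauss_integral n hb]
  have hI2 : ∫ α : Fin n → ℝ,
      (∑ i, (α i) ^ 2) * Real.exp (-(∑ i, (α i) ^ 2) / (2 * σ ^ 2)) = n * σ ^ 2 * J ^ n := by
    rw [integral_congr_ae (by filter_upwards with α; rw [hge]), pi_q_gauss_integral n hn hb,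
      h2binv]
  -- bound on ∫ ‖K‖
  have hKc : Continuous K := by
    apply Continuous.mul
    · exact (continuous_finset_sum _ fun i _ => (continuous_apply i).pow 2).sub
        continuous_const |>.div_const _
    · exact Real.continuous_exp.comp
        (((continuous_finset_sum _ fun i _ => (continuous_apply i).pow 2).neg).div_const _)
  have hq_nonneg : ∀ α : Fin n → ℝ, (0:ℝ) ≤ ∑ i, (α i) ^ 2 :=
    fun α => Finset.sum_nonneg fun i _ => sq_nonneg _
  have hDomI : Integrable (fun α : Fin n → ℝ =>
      (σ ^ 4)⁻¹ * ((∑ i, (α i) ^ 2) * Real.exp (-(∑ i, (α i) ^ 2) / (2 * σ ^ 2)))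
      + (n * σ ^ 2 / σ ^ 4) * Real.exp (-(∑ i, (α i) ^ 2) / (2 * σ ^ 2))) :=
    (hqgI.const_mul _).add (hgI.const_mul _)
  have hKnorm_le : ∫ α : Fin n → ℝ, ‖K α‖
      ≤ 2 * n * (2 * Real.pi * σ ^ 2) ^ ((n : ℝ) / 2) / σ ^ 2 := by
    have hle : ∀ α : Fin n → ℝ, ‖K α‖
        ≤ (σ ^ 4)⁻¹ * ((∑ i, (α i) ^ 2) * Real.exp (-(∑ i, (α i) ^ 2) / (2 * σ ^ 2)))
          + (n * σ ^ 2 / σ ^ 4) * Real.exp (-(∑ i, (α i) ^ 2) / (2 * σ ^ 2)) := by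
      intro α
      rw [hKdef]
      have hexp : (0:ℝ) < Real.exp (-(∑ i, (α i) ^ 2) / (2 * σ ^ 2)) := Real.exp_pos _
      rw [Real.norm_eq_abs, abs_mul, abs_of_pos hexp]
      have habs : |((∑ i, (α i) ^ 2) - n * σ ^ 2) / σ ^ 4|
          ≤ ((∑ i, (α i) ^ 2) + n * σ ^ 2) / σ ^ 4 := by
        rw [abs_div, abs_of_pos hσ4]
        gcongr
        calc |(∑ i, (α i) ^ 2) - n * σ ^ 2| ≤ |∑ i, (α i) ^ 2| + |(n:ℝ) * σ ^ 2| := abs_sub _ _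
          _ = (∑ i, (α i) ^ 2) + n * σ ^ 2 := by
              rw [abs_of_nonneg (hq_nonneg α), abs_of_nonneg (by positivity)]
      calc |((∑ i, (α i) ^ 2) - n * σ ^ 2) / σ ^ 4| * Real.exp (-(∑ i, (α i) ^ 2) / (2 * σ ^ 2))
          ≤ (((∑ i, (α i) ^ 2) + n * σ ^ 2) / σ ^ 4) * Real.exp (-(∑ i, (α i) ^ 2) / (2 * σ ^ 2)) :=
            mul_le_mul_of_nonneg_right habs hexp.le
        _ = (σ ^ 4)⁻¹ * ((∑ i, (α i) ^ 2) * Real.exp (-(∑ i, (α i) ^ 2) / (2 * σ ^ 2)))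
            + (n * σ ^ 2 / σ ^ 4) * Real.exp (-(∑ i, (α i) ^ 2) / (2 * σ ^ 2)) := by ring
    calc ∫ α : Fin n → ℝ, ‖K α‖
        ≤ ∫ α : Fin n → ℝ,
            ((σ ^ 4)⁻¹ * ((∑ i, (α i) ^ 2) * Real.exp (-(∑ i, (α i) ^ 2) / (2 * σ ^ 2)))
            + (n * σ ^ 2 / σ ^ 4) * Real.exp (-(∑ i, (α i) ^ 2) / (2 * σ ^ 2))) :=
          integral_mono hKI.norm hDomI hle
      _ = (σ ^ 4)⁻¹ * (n * σ ^ 2 * J ^ n) + (n * σ ^ 2 / σ ^ 4) * J ^ n := by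
          rw [integral_add (hqgI.const_mul _) (hgI.const_mul _), integral_const_mul,
            integral_const_mul, hI0, hI2]
      _ = 2 * n * J ^ n / σ ^ 2 := by field_simp; ring
      _ = 2 * n * (2 * Real.pi * σ ^ 2) ^ ((n : ℝ) / 2) / σ ^ 2 := by rw [hJA]
  -- sup norm of φ₁ - φ₂
  set M : ℝ := ⨆ x : Fin n → ℝ, |φ₁ x - φ₂ x| with hMdef
  have hbdd : BddAbove (Set.range fun x : Fin n → ℝ => |φ₁ x - φ₂ x|) := by
    refine ⟨C₁ + C₂, ?_⟩
    rintro _ ⟨y, rfl⟩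
    exact (abs_sub _ _).trans (add_le_add (hC₁ y) (hC₂ y))
  have hM : ∀ y : Fin n → ℝ, |φ₁ y - φ₂ y| ≤ M := fun y => le_ciSup hbdd y
  have hM0 : 0 ≤ M := (abs_nonneg _).trans (hM 0)
  -- per-point bound
  have hCnonneg : (0:ℝ) ≤ 2 * n * (2 * Real.pi * σ ^ 2) ^ ((n : ℝ) / 2) / σ ^ 2 := by positivity
  apply ciSup_le
  intro x
  -- integrability of φᵢ(x-α) * K α
  have hint : ∀ (φ : (Fin n → ℝ) → ℝ) (C : ℝ), Continuous φ → (∀ y, |φ y| ≤ C) →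
      Integrable (fun α : Fin n → ℝ => φ (x - α) * K α) := by
    intro φ C hc hCb
    apply Integrable.mono' (hKI.norm.const_mul C)
    · exact ((hc.comp (continuous_const.sub continuous_id)).mul hKc).aestronglyMeasurable
    · filter_upwards with α
      rw [norm_mul]
      exact mul_le_mul_of_nonneg_right
        (by rw [Real.norm_eq_abs]; exact hCb _) (norm_nonneg _)
  have h1 := hint φ₁ C₁ hφ₁c hC₁
  have h2 := hint φ₂ C₂ hφ₂c hC₂
  rw [← integral_sub h1 h2]
  calc |∫ α : Fin n → ℝ, (φ₁ (x - α) * K α - φ₂ (x - α) * K α)|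
      = |∫ α : Fin n → ℝ, (φ₁ (x - α) - φ₂ (x - α)) * K α| := by
        congr 1; exact integral_congr_ae (by filter_upwards with α; ring)
    _ ≤ ∫ α : Fin n → ℝ, M * ‖K α‖ := by
        rw [← Real.norm_eq_abs]
        apply norm_integral_le_of_norm_le (hKI.norm.const_mul M)
        filter_upwards with α
        rw [norm_mul]
        exact mul_le_mul_of_nonneg_right
          (by rw [Real.norm_eq_abs]; exact hM _) (norm_nonneg _)
    _ = M * ∫ α : Fin n → ℝ, ‖K α‖ := integral_const_mul M _
    _ ≤ M * (2 * n * (2 * Real.pi * σ ^ 2) ^ ((n : ℝ) / 2) / σ ^ 2) :=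
        mul_le_mul_of_nonneg_left hKnorm_le hM0
    _ = (2 * n * (2 * Real.pi * σ ^ 2) ^ ((n : ℝ) / 2) / σ ^ 2) * M := mul_comm _ _
end

section
/- Let n be a positive integer, σ > 0, and let φ₁, φ₂ : ℝⁿ → ℝ be bounded continuous functions. Define G(α) = exp(−(∑_{i=1}^n αᵢ²)/(2σ²)), ΔG(α) = ((∑_{i=1}^n αᵢ² − nσ²)/σ⁴)·G(α), and the G-LoG bi-filter functions γ¹_φ(x) = ∫_{ℝⁿ} φ(x − α)·G(α) dα and γ²_φ(x) = ∫_{ℝⁿ} φ(x − α)·ΔG(α) dα. Then max{ sup_{x ∈ ℝⁿ} |γ¹_{φ₁}(x) − γ¹_{φ₂}(x)|, sup_{x ∈ ℝⁿ} |γ²_{φ₁}(x) − γ²_{φ₂}(x)| } ≤ C · sup_{x ∈ ℝⁿ} |φ₁(x) − φ₂(x)|, where C = max{ (2πσ²)^{n/2}, 2n(2πσ²)^{n/2}/σ² }. -/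
open MeasureTheory Real

lemma gauss_moment2_aux {b : ℝ} (hb : 0 < b) :
    ∫ x : ℝ, x ^ 2 * Real.exp (-b * x ^ 2) = (1 / (2 * b)) * Real.sqrt (π / b) := by
  have h1 : (fun x : ℝ => x ^ 2 * Real.exp (-b * x ^ 2))
      = fun x : ℝ => |x| ^ 2 * Real.exp (-b * |x| ^ 2) := by
    funext x; rw [sq_abs]
  rw [h1, integral_comp_abs (f := fun x => x ^ 2 * Real.exp (-b * x ^ 2))]
  have h2 : ∫ x in Set.Ioi (0:ℝ), x ^ 2 * Real.exp (-b * x ^ 2)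
      = ∫ x in Set.Ioi (0:ℝ), x ^ (2:ℝ) * Real.exp (-b * x ^ (2:ℝ)) := by
    refine setIntegral_congr_fun measurableSet_Ioi (fun x hx => ?_)
    rw [show ((2:ℝ)) = ((2:ℕ):ℝ) by norm_num, Real.rpow_natCast]
  rw [h2, integral_rpow_mul_exp_neg_mul_rpow (by norm_num) (by norm_num) hb]
  have hG : Real.Gamma (((2:ℝ) + 1) / 2) = Real.sqrt π / 2 := by
    rw [show ((2:ℝ) + 1) / 2 = 1/2 + 1 by norm_num,
      Real.Gamma_add_one (by norm_num), Real.Gamma_one_half_eq]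
    ring
  have hbr : b ^ (-((2:ℝ) + 1) / 2) = (Real.sqrt b ^ 3)⁻¹ := by
    rw [show -((2:ℝ)+1)/2 = -(3/2) by norm_num, Real.rpow_neg hb.le, Real.sqrt_eq_rpow,
      ← Real.rpow_natCast (b ^ ((1:ℝ)/2)) 3, ← Real.rpow_mul hb.le]
    norm_num
  rw [hG, hbr, Real.sqrt_div Real.pi_pos.le]
  have hs : 0 < Real.sqrt b := Real.sqrt_pos.2 hb
  have hs2 : Real.sqrt b ^ 2 = b := Real.sq_sqrt hb.le
  field_simp
  have h3 : √b ^ 3 = b * √b := by rw [pow_succ, hs2]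
  rw [hs2]

/-- Stability of the G-LoG bi-filter functions: for bounded continuous
`φ₁ φ₂ : ℝⁿ → ℝ`, with `G(α) = exp(−(∑ αᵢ²)/(2σ²))`,
`ΔG(α) = ((∑ αᵢ² − nσ²)/σ⁴)·G(α)`, `γ¹_φ = φ ∗ G` and `γ²_φ = φ ∗ ΔG`, we have
`max(‖γ¹_{φ₁} − γ¹_{φ₂}‖_∞, ‖γ²_{φ₁} − γ²_{φ₂}‖_∞) ≤ C · ‖φ₁ − φ₂‖_∞` where
`C = max((2πσ²)^(n/2), 2n(2πσ²)^(n/2)/σ²)`. -/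
theorem glog_bifiltration_sup_bound
    (n : ℕ) (hn : 0 < n) (σ : ℝ) (hσ : 0 < σ)
    (φ₁ φ₂ : (Fin n → ℝ) → ℝ)
    (hφ₁c : Continuous φ₁) (hφ₂c : Continuous φ₂)
    (hφ₁b : ∃ C, ∀ x, |φ₁ x| ≤ C) (hφ₂b : ∃ C, ∀ x, |φ₂ x| ≤ C)
    (G ΔG : (Fin n → ℝ) → ℝ)
    (hG : ∀ α : Fin n → ℝ, G α = Real.exp (-(∑ i, (α i) ^ 2) / (2 * σ ^ 2)))
    (hΔG : ∀ α : Fin n → ℝ,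
      ΔG α = (((∑ i, (α i) ^ 2) - n * σ ^ 2) / σ ^ 4) * G α)
    (γ₁ γ₂ : ((Fin n → ℝ) → ℝ) → (Fin n → ℝ) → ℝ)
    (hγ₁ : ∀ φ x, γ₁ φ x = ∫ α : Fin n → ℝ, φ (x - α) * G α)
    (hγ₂ : ∀ φ x, γ₂ φ x = ∫ α : Fin n → ℝ, φ (x - α) * ΔG α) :
    max (⨆ x : Fin n → ℝ, |γ₁ φ₁ x - γ₁ φ₂ x|)
        (⨆ x : Fin n → ℝ, |γ₂ φ₁ x - γ₂ φ₂ x|)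
      ≤ max ((2 * Real.pi * σ ^ 2) ^ ((n : ℝ) / 2))
            (2 * n * (2 * Real.pi * σ ^ 2) ^ ((n : ℝ) / 2) / σ ^ 2)
          * ⨆ x : Fin n → ℝ, |φ₁ x - φ₂ x| := by
  set b : ℝ := (2 * σ ^ 2)⁻¹ with hbdef
  have hb : 0 < b := by positivity
  have hσ2 : (0:ℝ) < σ ^ 2 := by positivity
  have hσ4 : (0:ℝ) < σ ^ 4 := by positivity
  -- product form of G
  have hGprod : ∀ α : Fin n → ℝ, G α = ∏ i, Real.exp (-b * (α i) ^ 2) := by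
    intro α
    have hs : ∑ i : Fin n, -b * (α i) ^ 2 = -b * ∑ i, (α i) ^ 2 := by
      rw [← Finset.mul_sum]
    rw [hG, ← Real.exp_sum]
    congr 1
    rw [hs, hbdef]
    field_simp
  set I0 : ℝ := Real.sqrt (2 * π * σ ^ 2) with hI0
  have hπb : π / b = 2 * π * σ ^ 2 := by
    rw [hbdef]; field_simp
  have hI0pos : 0 < I0 := Real.sqrt_pos.2 (by positivity)
  have heI : ∫ x : ℝ, Real.exp (-b * x ^ 2) = I0 := by
    rw [integral_gaussian, hπb]
  have h2I : ∫ x : ℝ, x ^ 2 * Real.exp (-b * x ^ 2) = σ ^ 2 * I0 := by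
    rw [gauss_moment2_aux hb, hπb]
    congr 1
    rw [hbdef]; field_simp
  have hC0 : (2 * π * σ ^ 2) ^ ((n:ℝ) / 2) = I0 ^ n := by
    rw [hI0, Real.sqrt_eq_rpow, ← Real.rpow_natCast ((2*π*σ^2) ^ ((1:ℝ)/2)) n,
      ← Real.rpow_mul (by positivity)]
    congr 1; ring
  -- integrability (1D)
  have hexpint : Integrable (fun x : ℝ => Real.exp (-b * x ^ 2)) := integrable_exp_neg_mul_sq hb
  have hx2int : Integrable (fun x : ℝ => x ^ 2 * Real.exp (-b * x ^ 2)) := by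
    have h := integrable_rpow_mul_exp_neg_mul_sq hb (s := 2) (by norm_num)
    have heq : (fun x : ℝ => x ^ (2:ℝ) * Real.exp (-b * x ^ 2))
        = fun x : ℝ => x ^ 2 * Real.exp (-b * x ^ 2) := by
      funext x
      rw [show ((2:ℝ)) = ((2:ℕ):ℝ) by norm_num, Real.rpow_natCast]
    rw [heq] at h
    exact h
  -- integrability and integral of G
  have hGint : Integrable G := by
    have h : Integrable (fun α : Fin n → ℝ => ∏ i, Real.exp (-b * (α i) ^ 2)) :=
      Integrable.fintype_prod (fun _ => hexpint)
    exact h.congr (Filter.Eventually.of_forall fun α => (hGprod α).symm)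
  have hGpos : ∀ α, 0 < G α := fun α => by rw [hG]; exact Real.exp_pos _
  have hintG : ∫ α : Fin n → ℝ, G α = I0 ^ n := by
    rw [integral_congr_ae (Filter.Eventually.of_forall hGprod),
      integral_fintype_prod_volume_eq_pow (ι := Fin n) (fun x : ℝ => Real.exp (-b * x ^ 2)),
      heI, Fintype.card_fin]
  -- coordinate-square integrals
  have hcoord : ∀ i : Fin n, Integrable (fun α : Fin n → ℝ => (α i) ^ 2 * G α) ∧
      ∫ α : Fin n → ℝ, (α i) ^ 2 * G α = σ ^ 2 * I0 ^ n := by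
    intro i
    set F : Fin n → ℝ → ℝ := fun j x =>
      if j = i then x ^ 2 * Real.exp (-b * x ^ 2) else Real.exp (-b * x ^ 2) with hF
    have hFint : ∀ j, Integrable (F j) := by
      intro j
      by_cases h : j = i
      · simp only [hF, if_pos h]; exact hx2int
      · simp only [hF, if_neg h]; exact hexpint
    have hrepr : ∀ α : Fin n → ℝ, (α i) ^ 2 * G α = ∏ j, F j (α j) := by
      intro α
      rw [hGprod α,
        ← Finset.mul_prod_erase Finset.univ (fun j => Real.exp (-b * (α j) ^ 2))
          (Finset.mem_univ i),
        ← Finset.mul_prod_erase Finset.univ (fun j => F j (α j)) (Finset.mem_univ i)]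
      have h1 : F i (α i) = (α i) ^ 2 * Real.exp (-b * (α i) ^ 2) := by
        simp only [hF, if_pos rfl]
      have h2 : ∏ j ∈ Finset.univ.erase i, F j (α j)
          = ∏ j ∈ Finset.univ.erase i, Real.exp (-b * (α j) ^ 2) :=
        Finset.prod_congr rfl fun j hj => by
          simp only [hF, if_neg (Finset.ne_of_mem_erase hj)]
      rw [h1, h2]; ring
    have hFint' : ∀ j, ∫ x : ℝ, F j x = if j = i then σ ^ 2 * I0 else I0 := by
      intro j
      by_cases h : j = i
      · simp only [hF, if_pos h]; exact h2I
      · simp only [hF, if_neg h]; exact heI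
    constructor
    · exact (Integrable.fintype_prod hFint).congr
        (Filter.Eventually.of_forall fun α => (hrepr α).symm)
    · rw [integral_congr_ae (Filter.Eventually.of_forall hrepr),
        integral_fintype_prod_volume_eq_prod (ι := Fin n) F]
      rw [Finset.prod_congr rfl (fun j _ => hFint' j),
        ← Finset.mul_prod_erase Finset.univ _ (Finset.mem_univ i), if_pos rfl]
      rw [Finset.prod_congr rfl (fun j hj => if_neg (Finset.ne_of_mem_erase hj)),
        Finset.prod_const, Finset.card_erase_of_mem (Finset.mem_univ i),
        Finset.card_univ, Fintype.card_fin]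
      rw [mul_assoc, ← pow_succ']
      congr 2
      omega
  -- sum-of-squares integral
  have hsum_int : Integrable (fun α : Fin n → ℝ => (∑ i, (α i) ^ 2) * G α) := by
    have h : (fun α : Fin n → ℝ => (∑ i, (α i) ^ 2) * G α)
        = fun α => ∑ i, (α i) ^ 2 * G α := by
      funext α; rw [Finset.sum_mul]
    rw [h]
    exact integrable_finset_sum _ (fun i _ => (hcoord i).1)
  have hsum_integral : ∫ α : Fin n → ℝ, (∑ i, (α i) ^ 2) * G α = n * σ ^ 2 * I0 ^ n := by
    have h : (fun α : Fin n → ℝ => (∑ i, (α i) ^ 2) * G α)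
        = fun α => ∑ i, (α i) ^ 2 * G α := by
      funext α; rw [Finset.sum_mul]
    rw [h, integral_finset_sum _ (fun i _ => (hcoord i).1),
      Finset.sum_congr rfl (fun i _ => (hcoord i).2), Finset.sum_const,
      Finset.card_univ, Fintype.card_fin, nsmul_eq_mul]
    ring
  -- integrability of ΔG
  have hΔGrepr : ΔG = fun α => (σ ^ 4)⁻¹ * ((∑ i, (α i) ^ 2) * G α)
      + (-(n * σ ^ 2 / σ ^ 4)) * G α := by
    funext α; rw [hΔG α]; ring
  have hΔGint : Integrable ΔG := by
    rw [hΔGrepr]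
    exact (hsum_int.const_mul _).add (hGint.const_mul _)
  -- the LoG mass bound
  have hAbsΔG : ∫ α : Fin n → ℝ, |ΔG α| ≤ 2 * n * I0 ^ n / σ ^ 2 := by
    have hle : ∀ α : Fin n → ℝ, |ΔG α| ≤
        (σ ^ 4)⁻¹ * ((∑ i, (α i) ^ 2) * G α) + (n * σ ^ 2 / σ ^ 4) * G α := by
      intro α
      have hsnn : 0 ≤ ∑ i, (α i) ^ 2 := Finset.sum_nonneg fun i _ => sq_nonneg _
      have hnn : (0:ℝ) ≤ (n:ℝ) * σ ^ 2 := by positivity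
      have habs : |(∑ i, (α i) ^ 2) - n * σ ^ 2| ≤ (∑ i, (α i) ^ 2) + n * σ ^ 2 :=
        abs_le.mpr ⟨by linarith, by linarith⟩
      rw [hΔG α, abs_mul, abs_of_pos (hGpos α), abs_div, abs_of_pos hσ4]
      calc |(∑ i, (α i) ^ 2) - ↑n * σ ^ 2| / σ ^ 4 * G α
          ≤ ((∑ i, (α i) ^ 2) + ↑n * σ ^ 2) / σ ^ 4 * G α := by
            apply mul_le_mul_of_nonneg_right _ (hGpos α).le
            exact div_le_div_of_nonneg_right habs hσ4.le
        _ = (σ ^ 4)⁻¹ * ((∑ i, (α i) ^ 2) * G α) + (↑n * σ ^ 2 / σ ^ 4) * G α := by ring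
    have hbint : Integrable (fun α : Fin n → ℝ =>
        (σ ^ 4)⁻¹ * ((∑ i, (α i) ^ 2) * G α) + (n * σ ^ 2 / σ ^ 4) * G α) :=
      (hsum_int.const_mul _).add (hGint.const_mul _)
    calc ∫ α : Fin n → ℝ, |ΔG α|
        ≤ ∫ α : Fin n → ℝ, ((σ ^ 4)⁻¹ * ((∑ i, (α i) ^ 2) * G α)
            + (n * σ ^ 2 / σ ^ 4) * G α) :=
          integral_mono hΔGint.abs hbint hle
      _ = (σ ^ 4)⁻¹ * (n * σ ^ 2 * I0 ^ n) + (n * σ ^ 2 / σ ^ 4) * (I0 ^ n) := by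
          rw [integral_add (hsum_int.const_mul _) (hGint.const_mul _),
            integral_const_mul, integral_const_mul, hsum_integral, hintG]
      _ = 2 * n * I0 ^ n / σ ^ 2 := by field_simp; ring
  have hAbsG : ∫ α : Fin n → ℝ, |G α| = I0 ^ n := by
    rw [integral_congr_ae (Filter.Eventually.of_forall fun α => abs_of_pos (hGpos α)), hintG]
  -- sup norm of φ₁ - φ₂
  obtain ⟨C₁, hC₁⟩ := hφ₁b
  obtain ⟨C₂, hC₂⟩ := hφ₂b
  set M : ℝ := ⨆ x : Fin n → ℝ, |φ₁ x - φ₂ x| with hMdef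
  have hbdd : BddAbove (Set.range fun x : Fin n → ℝ => |φ₁ x - φ₂ x|) := by
    refine ⟨C₁ + C₂, ?_⟩
    rintro _ ⟨x, rfl⟩
    exact (abs_sub _ _).trans (add_le_add (hC₁ x) (hC₂ x))
  have hM : ∀ x, |φ₁ x - φ₂ x| ≤ M := fun x => le_ciSup hbdd x
  have hM0 : 0 ≤ M := le_trans (abs_nonneg _) (hM 0)
  -- generic pointwise bound
  have key : ∀ (K : (Fin n → ℝ) → ℝ), Integrable K → ∀ x : Fin n → ℝ,
      |(∫ α : Fin n → ℝ, φ₁ (x - α) * K α) - ∫ α : Fin n → ℝ, φ₂ (x - α) * K α|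
        ≤ M * ∫ α : Fin n → ℝ, |K α| := by
    intro K hK x
    have hm1 : AEStronglyMeasurable (fun α : Fin n → ℝ => φ₁ (x - α)) volume :=
      (hφ₁c.comp (continuous_const.sub continuous_id)).aestronglyMeasurable
    have hm2 : AEStronglyMeasurable (fun α : Fin n → ℝ => φ₂ (x - α)) volume :=
      (hφ₂c.comp (continuous_const.sub continuous_id)).aestronglyMeasurable
    have hint1 : Integrable (fun α : Fin n → ℝ => φ₁ (x - α) * K α) :=
      hK.bdd_mul hm1 (c := C₁) (Filter.Eventually.of_forall fun α => by rw [Real.norm_eq_abs]; exact hC₁ _)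
    have hint2 : Integrable (fun α : Fin n → ℝ => φ₂ (x - α) * K α) :=
      hK.bdd_mul hm2 (c := C₂) (Filter.Eventually.of_forall fun α => by rw [Real.norm_eq_abs]; exact hC₂ _)
    rw [← integral_sub hint1 hint2]
    calc |∫ α : Fin n → ℝ, (φ₁ (x - α) * K α - φ₂ (x - α) * K α)|
        ≤ ∫ α : Fin n → ℝ, |φ₁ (x - α) * K α - φ₂ (x - α) * K α| := by
          rw [← Real.norm_eq_abs]
          exact (norm_integral_le_integral_norm _).trans_eq (by simp [Real.norm_eq_abs])
      _ ≤ ∫ α : Fin n → ℝ, M * |K α| := by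
          refine integral_mono (hint1.sub hint2).abs (hK.abs.const_mul M) fun α => ?_
          rw [← sub_mul, abs_mul]
          exact mul_le_mul_of_nonneg_right (hM _) (abs_nonneg _)
      _ = M * ∫ α : Fin n → ℝ, |K α| := integral_const_mul M _
  have s1 : (⨆ x : Fin n → ℝ, |γ₁ φ₁ x - γ₁ φ₂ x|) ≤ I0 ^ n * M := by
    refine ciSup_le fun x => ?_
    rw [hγ₁, hγ₁]
    calc |(∫ α : Fin n → ℝ, φ₁ (x - α) * G α) - ∫ α : Fin n → ℝ, φ₂ (x - α) * G α|
        ≤ M * ∫ α : Fin n → ℝ, |G α| := key G hGint x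
      _ = I0 ^ n * M := by rw [hAbsG]; ring
  have s2 : (⨆ x : Fin n → ℝ, |γ₂ φ₁ x - γ₂ φ₂ x|) ≤ (2 * n * I0 ^ n / σ ^ 2) * M := by
    refine ciSup_le fun x => ?_
    rw [hγ₂, hγ₂]
    calc |(∫ α : Fin n → ℝ, φ₁ (x - α) * ΔG α) - ∫ α : Fin n → ℝ, φ₂ (x - α) * ΔG α|
        ≤ M * ∫ α : Fin n → ℝ, |ΔG α| := key ΔG hΔGint x
      _ ≤ M * (2 * n * I0 ^ n / σ ^ 2) := mul_le_mul_of_nonneg_left hAbsΔG hM0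
      _ = (2 * n * I0 ^ n / σ ^ 2) * M := by ring
  rw [hC0]
  refine max_le ?_ ?_
  · exact s1.trans (mul_le_mul_of_nonneg_right (le_max_left _ _) hM0)
  · exact s2.trans (mul_le_mul_of_nonneg_right (le_max_right _ _) hM0)
end
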